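/- Let α ∈ (1,2], σ > 0, μ ≠ 0, and define W(x) = (1/μ)[1 − E_{α−1,1}(−(μ/σ^α) x^{α−1})], A = (μ/σ^α) a^{α−1} for a > 0. Then W is differentiable on (0,∞) with W′(x) = ((α−1)/σ^α) x^{α−2} E′_{α−1,1}(−(μ/σ^α) x^{α−1}), and consequently W′(a)/W(a)² · ∫₀^a W(z)dz = (α−1) A E′_{α−1,1}(−A) · (1 − E_{α−1,2}(−A)) / (1 − E_{α−1,1}(−A))². -/

import Mathlib

open MeasureTheory Real Filter

/-- The two-parameter Mittag-Leffler function `E_{β,γ}(y) = ∑ yⁿ / Γ(nβ + γ)`. -/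
noncomputable def mittagLeffler (β γ y : ℝ) : ℝ :=
  ∑' n : ℕ, y ^ n / Real.Gamma ((n : ℝ) * β + γ)

lemma gamma_step {β x : ℝ} (hβ0 : 0 < β) (hβ1 : β ≤ 1) (hx : 1 < x) :
    (x + β - 1) ^ β * Real.Gamma x ≤ Real.Gamma (x + β) := by
  have hy : 0 < x + β - 1 := by linarith
  have hxp : 0 < x := by linarith
  have hxb : 0 < x + β := by linarith
  have hΓy : 0 < Real.Gamma (x + β - 1) := Real.Gamma_pos_of_pos hy
  have hΓx : 0 < Real.Gamma x := Real.Gamma_pos_of_pos hxp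
  have hΓxb : 0 < Real.Gamma (x + β) := Real.Gamma_pos_of_pos hxb
  have hconv := Real.convexOn_log_Gamma.2 (Set.mem_Ioi.2 hy) (Set.mem_Ioi.2 hxb)
    hβ0.le (by linarith : (0:ℝ) ≤ 1 - β) (by ring)
  have hcomb : β • (x + β - 1) + (1 - β) • (x + β) = x := by
    simp only [smul_eq_mul]; ring
  rw [hcomb] at hconv
  simp only [Function.comp_apply, smul_eq_mul] at hconv
  have hadd : Real.Gamma (x + β) = (x + β - 1) * Real.Gamma (x + β - 1) := by
    have := Real.Gamma_add_one hy.ne'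
    rw [show x + β - 1 + 1 = x + β by ring] at this
    exact this
  have hlogy : Real.log (Real.Gamma (x + β - 1))
      = Real.log (Real.Gamma (x + β)) - Real.log (x + β - 1) := by
    rw [hadd, Real.log_mul hy.ne' hΓy.ne']; ring
  rw [hlogy] at hconv
  have key : Real.log ((x + β - 1) ^ β * Real.Gamma x) ≤ Real.log (Real.Gamma (x + β)) := by
    rw [Real.log_mul (by positivity) hΓx.ne', Real.log_rpow hy]
    nlinarith [hconv]
  exact (Real.log_le_log_iff (by positivity) hΓxb).1 key

lemma ml_summable {β : ℝ} (hβ0 : 0 < β) (hβ1 : β ≤ 1) {γ : ℝ} (hγ : 0 < γ) (r : ℝ) :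
    Summable (fun n : ℕ => r ^ n / Real.Gamma ((n : ℝ) * β + γ)) := by
  apply summable_of_ratio_norm_eventually_le (r := 1/2) (by norm_num)
  have htend : Tendsto (fun n : ℕ => (n : ℝ) * β + γ) atTop atTop := by
    apply Filter.tendsto_atTop_add_const_right
    exact Tendsto.atTop_mul_const hβ0 tendsto_natCast_atTop_atTop
  set M : ℝ := (2 * |r| + 1) ^ β⁻¹ with hM
  have hMpos : (0:ℝ) < 2 * |r| + 1 := by positivity
  filter_upwards [htend.eventually_ge_atTop (max 2 (M + 1 - β))] with n hn
  set x : ℝ := (n : ℝ) * β + γ with hxdef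
  have hx2 : 2 ≤ x := le_trans (le_max_left _ _) hn
  have hxM : M ≤ x + β - 1 := by
    have := le_trans (le_max_right _ _) hn; linarith
  have hx1 : 1 < x := by linarith
  have hΓx : 0 < Real.Gamma x := Real.Gamma_pos_of_pos (by linarith)
  have hΓxb : 0 < Real.Gamma (x + β) := Real.Gamma_pos_of_pos (by linarith)
  have hpow : (2 * |r| + 1) ≤ (x + β - 1) ^ β := by
    calc (2 * |r| + 1) = ((2 * |r| + 1) ^ β⁻¹) ^ β := by
          rw [← Real.rpow_mul hMpos.le, inv_mul_cancel₀ hβ0.ne', Real.rpow_one]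
      _ ≤ (x + β - 1) ^ β := Real.rpow_le_rpow (Real.rpow_nonneg hMpos.le _) hxM hβ0.le
  have hstep : (2 * |r| + 1) * Real.Gamma x ≤ Real.Gamma (x + β) := by
    calc (2 * |r| + 1) * Real.Gamma x ≤ (x + β - 1) ^ β * Real.Gamma x := by
          exact mul_le_mul_of_nonneg_right hpow hΓx.le
      _ ≤ Real.Gamma (x + β) := gamma_step hβ0 hβ1 hx1
  have hxb : ((n : ℝ) + 1) * β + γ = x + β := by rw [hxdef]; ring
  rw [Real.norm_eq_abs, Real.norm_eq_abs, abs_div, abs_div, abs_pow, abs_pow]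
  push_cast
  rw [hxb, abs_of_pos hΓxb, abs_of_pos hΓx]
  have hrw : 1/2 * (|r|^n / Real.Gamma x) * Real.Gamma (x+β)
      = (|r|^n * Real.Gamma (x+β)) / (2 * Real.Gamma x) := by
    field_simp
  rw [div_le_iff₀ hΓxb, hrw, le_div_iff₀ (by positivity)]
  nlinarith [pow_nonneg (abs_nonneg r) n, mul_le_mul_of_nonneg_left hstep
    (pow_nonneg (abs_nonneg r) n), pow_succ |r| n, abs_nonneg r, hΓx.le,
    mul_nonneg (pow_nonneg (abs_nonneg r) n) hΓx.le]

lemma ml_hasDerivAt {β : ℝ} (hβ0 : 0 < β) (hβ1 : β ≤ 1) {γ : ℝ} (hγ : 0 < γ) (y : ℝ) :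
    HasDerivAt (mittagLeffler β γ) (deriv (mittagLeffler β γ) y) y := by
  set R : ℝ := |y| + 1 with hR
  have hR1 : 1 ≤ R := by linarith [abs_nonneg y]
  have hyR : y ∈ Metric.ball (0:ℝ) R := by
    rw [Metric.mem_ball, Real.dist_eq, sub_zero]; linarith
  have hu : Summable (fun n : ℕ => (n : ℝ) * R ^ (n - 1) / Real.Gamma ((n:ℝ) * β + γ)) := by
    apply Summable.of_nonneg_of_le (fun n => by positivity)
      (fun n => ?_) (ml_summable hβ0 hβ1 hγ (2 * R))
    have hΓ : 0 < Real.Gamma ((n:ℝ) * β + γ) := Real.Gamma_pos_of_pos (by positivity)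
    gcongr ?_ / _
    calc (n : ℝ) * R ^ (n - 1) ≤ (2:ℝ) ^ n * R ^ n := by
          apply mul_le_mul
          · exact_mod_cast (Nat.lt_two_pow_self (n := n)).le
          · exact pow_le_pow_right₀ (by linarith) (Nat.sub_le n 1)
          · positivity
          · positivity
      _ = (2 * R) ^ n := (mul_pow 2 R n).symm
  have h := hasDerivAt_tsum_of_isPreconnected hu Metric.isOpen_ball
    (convex_ball (0:ℝ) R).isPreconnected
    (g := fun (n : ℕ) (z : ℝ) => z ^ n / Real.Gamma ((n:ℝ) * β + γ))
    (g' := fun (n : ℕ) (z : ℝ) => (n : ℝ) * z ^ (n - 1) / Real.Gamma ((n:ℝ) * β + γ))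
    (fun n z _ => (hasDerivAt_pow n z).div_const _)
    (fun n z hz => ?_) hyR (ml_summable hβ0 hβ1 hγ y) hyR
  · have h' : HasDerivAt (mittagLeffler β γ) (∑' n : ℕ, (n : ℝ) * y ^ (n - 1) /
        Real.Gamma ((n:ℝ) * β + γ)) y := h
    rw [h'.deriv]; exact h'
  · have hΓ : 0 < Real.Gamma ((n:ℝ) * β + γ) := Real.Gamma_pos_of_pos (by positivity)
    rw [Real.norm_eq_abs, abs_div, abs_of_pos hΓ, abs_mul, abs_pow, Nat.abs_cast]
    gcongr ?_ / _
    apply mul_le_mul_of_nonneg_left (pow_le_pow_left₀ (abs_nonneg z) ?_ _) (Nat.cast_nonneg n)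
    have := Metric.mem_ball.1 hz
    rw [Real.dist_eq, sub_zero] at this
    linarith

lemma ml_continuous {β : ℝ} (hβ0 : 0 < β) (hβ1 : β ≤ 1) {γ : ℝ} (hγ : 0 < γ) :
    Continuous (mittagLeffler β γ) :=
  continuous_iff_continuousAt.2 fun y => (ml_hasDerivAt hβ0 hβ1 hγ y).differentiableAt.continuousAt

theorem stmt19 (α σ μ : ℝ) (hα1 : 1 < α) (hα2 : α ≤ 2) (hσ : 0 < σ) (hμ : μ ≠ 0)
    (W : ℝ → ℝ)
    (hW : ∀ x : ℝ, W x = (1 / μ) * (1 - mittagLeffler (α - 1) 1 (-(μ / σ ^ α) * x ^ (α - 1))))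
    (a : ℝ) (ha : 0 < a) (A : ℝ) (hA : A = (μ / σ ^ α) * a ^ (α - 1)) :
    (∀ x : ℝ, 0 < x → HasDerivAt W
      (((α - 1) / σ ^ α) * x ^ (α - 2) *
        deriv (mittagLeffler (α - 1) 1) (-(μ / σ ^ α) * x ^ (α - 1))) x) ∧
    deriv W a / (W a) ^ 2 * ∫ z in (0:ℝ)..a, W z
      = (α - 1) * A * deriv (mittagLeffler (α - 1) 1) (-A) *
        (1 - mittagLeffler (α - 1) 2 (-A)) / (1 - mittagLeffler (α - 1) 1 (-A)) ^ 2 := by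
  have hβ0 : 0 < α - 1 := by linarith
  have hβ1 : α - 1 ≤ 1 := by linarith
  have hσα : (0:ℝ) < σ ^ α := Real.rpow_pos_of_pos hσ α
  have part1 : ∀ x : ℝ, 0 < x → HasDerivAt W
      (((α - 1) / σ ^ α) * x ^ (α - 2) *
        deriv (mittagLeffler (α - 1) 1) (-(μ / σ ^ α) * x ^ (α - 1))) x := by
    intro x hx
    have hg : HasDerivAt (fun x : ℝ => -(μ / σ ^ α) * x ^ (α - 1))
        (-(μ / σ ^ α) * ((α - 1) * x ^ (α - 2))) x := by
      have h0 := (Real.hasDerivAt_rpow_const (p := α - 1)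
        (Or.inl hx.ne')).const_mul (-(μ / σ ^ α))
      rwa [show α - 1 - 1 = α - 2 by ring] at h0
    have hE := ml_hasDerivAt hβ0 hβ1 one_pos (-(μ / σ ^ α) * x ^ (α - 1))
    have hcomp := hE.comp x hg
    have hWfun : W = fun x : ℝ =>
        (1 / μ) * (1 - mittagLeffler (α - 1) 1 (-(μ / σ ^ α) * x ^ (α - 1))) := funext hW
    rw [hWfun]
    have h2 := (hcomp.const_sub 1).const_mul (1 / μ)
    refine h2.congr_deriv ?_
    field_simp
  refine ⟨part1, ?_⟩
  -- continuity of the composed Mittag-Leffler function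
  have hcont : Continuous fun z : ℝ =>
      mittagLeffler (α - 1) 1 (-(μ / σ ^ α) * z ^ (α - 1)) :=
    (ml_continuous hβ0 hβ1 one_pos).comp
      (continuous_const.mul (Real.continuous_rpow_const hβ0.le))
  -- the series expansion of the integrand on `Ioc 0 a`
  set F : ℕ → ℝ → ℝ := fun n z =>
    ((-(μ / σ ^ α)) ^ n / Real.Gamma ((n : ℝ) * (α - 1) + 1)) * z ^ ((α - 1) * (n : ℝ)) with hF
  have hrepr : ∀ z ∈ Set.Ioc (0:ℝ) a,
      mittagLeffler (α - 1) 1 (-(μ / σ ^ α) * z ^ (α - 1)) = ∑' n : ℕ, F n z := by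
    intro z hz
    unfold mittagLeffler
    congr 1; funext n
    rw [hF]
    rw [mul_pow, ← Real.rpow_natCast (z ^ (α - 1)) n, ← Real.rpow_mul hz.1.le]
    ring
  have hpowint : ∀ n : ℕ, IntegrableOn (fun z : ℝ => z ^ ((α - 1) * (n : ℝ)))
      (Set.Ioc 0 a) volume := fun n =>
    (intervalIntegrable_iff_integrableOn_Ioc_of_le ha.le).1
      (intervalIntegral.intervalIntegrable_rpow (Or.inl (by positivity)))
  have hd1 : ∀ n : ℕ, (0:ℝ) < (α - 1) * (n : ℝ) + 1 := fun n => by positivity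
  have hval : ∀ n : ℕ, ∫ z in Set.Ioc (0:ℝ) a, z ^ ((α - 1) * (n : ℝ))
      = a ^ ((α - 1) * (n : ℝ) + 1) / ((α - 1) * (n : ℝ) + 1) := fun n => by
    rw [← intervalIntegral.integral_of_le ha.le,
      integral_rpow (Or.inl (lt_of_lt_of_le neg_one_lt_zero (by positivity))),
      Real.zero_rpow (hd1 n).ne']
    ring
  have hFint : ∀ n : ℕ, IntegrableOn (F n) (Set.Ioc 0 a) volume := fun n =>
    (hpowint n).const_mul _
  have hΓpos : ∀ n : ℕ, (0:ℝ) < Real.Gamma ((n : ℝ) * (α - 1) + 1) := fun n =>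
    Real.Gamma_pos_of_pos (by positivity)
  have hnorm : ∀ n : ℕ, (∫ z in Set.Ioc (0:ℝ) a, ‖F n z‖)
      = |(-(μ / σ ^ α)) ^ n / Real.Gamma ((n : ℝ) * (α - 1) + 1)|
        * (a ^ ((α - 1) * (n : ℝ) + 1) / ((α - 1) * (n : ℝ) + 1)) := fun n => by
    rw [← hval n, ← MeasureTheory.integral_const_mul]
    apply MeasureTheory.setIntegral_congr_fun measurableSet_Ioc
    intro z hz
    rw [hF]
    simp only [norm_mul, Real.norm_eq_abs]
    rw [abs_of_nonneg (Real.rpow_nonneg hz.1.le _)]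
  have hapow : ∀ n : ℕ, a ^ ((α - 1) * (n : ℝ) + 1) = (a ^ (α - 1)) ^ n * a := fun n => by
    rw [Real.rpow_add ha, Real.rpow_one, Real.rpow_mul ha.le, Real.rpow_natCast]
  have hsum : Summable fun n : ℕ => ∫ z in Set.Ioc (0:ℝ) a, ‖F n z‖ := by
    apply Summable.of_nonneg_of_le
      (fun n => MeasureTheory.integral_nonneg fun z => norm_nonneg _) (fun n => ?_)
      ((ml_summable hβ0 hβ1 one_pos (|μ / σ ^ α| * a ^ (α - 1))).mul_left a)
    rw [hnorm n, abs_div, abs_pow, abs_neg, abs_of_pos (hΓpos n), hapow n]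
    calc |μ / σ ^ α| ^ n / Real.Gamma ((n : ℝ) * (α - 1) + 1)
          * ((a ^ (α - 1)) ^ n * a / ((α - 1) * (n : ℝ) + 1))
        ≤ |μ / σ ^ α| ^ n / Real.Gamma ((n : ℝ) * (α - 1) + 1)
          * ((a ^ (α - 1)) ^ n * a) := by
          gcongr
          exact div_le_self (by positivity) (le_add_of_nonneg_left (by positivity))
      _ = a * ((|μ / σ ^ α| * a ^ (α - 1)) ^ n / Real.Gamma ((n : ℝ) * (α - 1) + 1)) := by
          rw [mul_pow]; ring
  have hterm : ∀ n : ℕ, ∫ z in Set.Ioc (0:ℝ) a, F n z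
      = a * ((-A) ^ n / Real.Gamma ((n : ℝ) * (α - 1) + 2)) := fun n => by
    have hΓ2 : Real.Gamma ((n : ℝ) * (α - 1) + 2)
        = ((n : ℝ) * (α - 1) + 1) * Real.Gamma ((n : ℝ) * (α - 1) + 1) := by
      rw [show (n : ℝ) * (α - 1) + 2 = ((n : ℝ) * (α - 1) + 1) + 1 by ring,
        Real.Gamma_add_one (by positivity)]
    have hAn : (-A) ^ n = (-(μ / σ ^ α)) ^ n * (a ^ (α - 1)) ^ n := by
      rw [← mul_pow, hA]; ring_nf
    simp only [hF]
    rw [MeasureTheory.integral_const_mul, hval n, hAn, hΓ2, hapow n]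
    have h1 : ((n : ℝ) * (α - 1) + 1) ≠ 0 := by positivity
    have h2 : (α - 1) * (n : ℝ) + 1 ≠ 0 := (hd1 n).ne'
    field_simp
  have hswap := MeasureTheory.integral_tsum_of_summable_integral_norm hFint hsum
  have hJ : ∫ z in (0:ℝ)..a, mittagLeffler (α - 1) 1 (-(μ / σ ^ α) * z ^ (α - 1))
      = a * mittagLeffler (α - 1) 2 (-A) := by
    rw [intervalIntegral.integral_of_le ha.le,
      MeasureTheory.setIntegral_congr_fun measurableSet_Ioc hrepr, ← hswap]
    unfold mittagLeffler
    rw [← tsum_mul_left]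
    exact tsum_congr hterm
  have hWint : ∫ z in (0:ℝ)..a, W z
      = (1 / μ) * (a - a * mittagLeffler (α - 1) 2 (-A)) := by
    simp only [hW]
    rw [intervalIntegral.integral_const_mul,
      intervalIntegral.integral_sub intervalIntegrable_const
        (hcont.intervalIntegrable 0 a), hJ]
    simp
  have hda : deriv W a = ((α - 1) / σ ^ α) * a ^ (α - 2) *
      deriv (mittagLeffler (α - 1) 1) (-(μ / σ ^ α) * a ^ (α - 1)) := (part1 a ha).deriv
  have hcA : -(μ / σ ^ α) * a ^ (α - 1) = -A := by rw [hA]; ring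
  rw [hda, hW a, hWint, hcA]
  by_cases ht : (1 - mittagLeffler (α - 1) 1 (-A)) = 0
  · rw [ht]; simp
  · have key : a ^ (α - 1) = a ^ (α - 2) * a := by
      rw [show α - 1 = (α - 2) + 1 by ring, Real.rpow_add ha, Real.rpow_one]
    set D := deriv (mittagLeffler (α - 1) 1) (-A) with hD
    set e1 := mittagLeffler (α - 1) 1 (-A) with he1
    set e2 := mittagLeffler (α - 1) 2 (-A) with he2
    rw [hA, key]
    field_simp
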